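/- Let p : ℝ → ℝ be differentiable at c = −2, satisfy f_c³(p(c)) = p(c) for all c in some neighborhood of −2, and satisfy p(−2) = 2 cos(4π/7). Then the function c ↦ 8 p(c) (p(c)² + c) ((p(c)² + c)² + c), which gives the derivative of f_c³ at the periodic point p(c), is differentiable at −2 and its derivative at −2 equals −16. -/

import Mathlib

open Real Filter

/-- The quadratic map `f_c(x) = x² + c`. -/
def fc (c : ℝ) : ℝ → ℝ := fun x => x ^ 2 + c

/-- The minimal polynomial relation for `2 cos (4π/7)`. -/
lemma cubic_two_cos : (2 * Real.cos (4 * π / 7)) ^ 3 + (2 * Real.cos (4 * π / 7)) ^ 2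
    - 2 * (2 * Real.cos (4 * π / 7)) - 1 = 0 := by
  set θ : ℝ := 4 * π / 7 with hθ
  have h3 : Real.cos (3 * θ) = Real.cos (2 * π / 7) := by
    rw [show 3 * θ = 2 * π - 2 * π / 7 by rw [hθ]; ring, Real.cos_two_pi_sub]
  have h4 : Real.cos (4 * θ) = Real.cos (2 * π / 7) := by
    rw [show 4 * θ = 2 * π / 7 + 2 * π by rw [hθ]; ring, Real.cos_add_two_pi]
  have hc3 : Real.cos (3 * θ) = 4 * Real.cos θ ^ 3 - 3 * Real.cos θ :=
    Real.cos_three_mul θ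
  have hc4 : Real.cos (4 * θ) = 2 * (2 * Real.cos θ ^ 2 - 1) ^ 2 - 1 := by
    rw [show 4 * θ = 2 * (2 * θ) by ring, Real.cos_two_mul, Real.cos_two_mul]
  have key : 4 * Real.cos θ ^ 3 - 3 * Real.cos θ
      = 2 * (2 * Real.cos θ ^ 2 - 1) ^ 2 - 1 := by
    rw [← hc3, ← hc4, h3, h4]
  have hne : Real.cos θ ≠ 1 := by
    have hπ : (0:ℝ) < π := Real.pi_pos
    have h1 : π / 2 < θ := by rw [hθ]; nlinarith
    have h2 : θ < π + π / 2 := by rw [hθ]; nlinarith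
    have := Real.cos_neg_of_pi_div_two_lt_of_lt h1 h2
    linarith
  have hfac : (Real.cos θ - 1) *
      ((2 * Real.cos θ) ^ 3 + (2 * Real.cos θ) ^ 2 - 2 * (2 * Real.cos θ) - 1) = 0 := by
    nlinarith [key]
  rcases mul_eq_zero.mp hfac with h | h
  · exact absurd (by linarith : Real.cos θ = 1) hne
  · exact h

theorem stmt_10 (p : ℝ → ℝ)
    (hp : DifferentiableAt ℝ p (-2))
    (hpfix : ∀ᶠ c in nhds (-2 : ℝ), (fc c)^[3] (p c) = p c)
    (hpval : p (-2) = 2 * Real.cos (4 * π / 7)) :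
    DifferentiableAt ℝ
      (fun c => 8 * p c * ((p c) ^ 2 + c) * (((p c) ^ 2 + c) ^ 2 + c)) (-2) ∧
    deriv (fun c => 8 * p c * ((p c) ^ 2 + c) * (((p c) ^ 2 + c) ^ 2 + c)) (-2) = -16 := by
  set x : ℝ := p (-2) with hx
  set q : ℝ := deriv p (-2) with hq
  have hcubic : x ^ 3 + x ^ 2 - 2 * x - 1 = 0 := by
    rw [hpval]; exact cubic_two_cos
  have hp' : HasDerivAt p q (-2) := hp.hasDerivAt
  -- derivative of c ↦ (p c)^2 + c
  have h1 : HasDerivAt (fun c : ℝ => (p c) ^ 2 + c) (2 * x * q + 1) (-2) := by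
    have := (hp'.pow 2).add (hasDerivAt_id (-2 : ℝ))
    exact this.congr_deriv (by rw [hx]; norm_num only; ring)
  -- derivative of c ↦ ((p c)^2 + c)^2 + c
  have h2 : HasDerivAt (fun c : ℝ => ((p c) ^ 2 + c) ^ 2 + c)
      (2 * (x ^ 2 + (-2)) * (2 * x * q + 1) + 1) (-2) := by
    have := (h1.pow 2).add (hasDerivAt_id (-2 : ℝ))
    exact this.congr_deriv (by rw [hx]; norm_num only; ring)
  -- derivative of c ↦ (((p c)^2 + c)^2 + c)^2 + c
  have h3 : HasDerivAt (fun c : ℝ => (((p c) ^ 2 + c) ^ 2 + c) ^ 2 + c)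
      (2 * ((x ^ 2 + (-2)) ^ 2 + (-2)) * (2 * (x ^ 2 + (-2)) * (2 * x * q + 1) + 1) + 1)
      (-2) := by
    have := (h2.pow 2).add (hasDerivAt_id (-2 : ℝ))
    exact this.congr_deriv (by rw [hx]; norm_num only; ring)
  -- the third iterate agrees with p near -2
  have hev : (fun c : ℝ => (((p c) ^ 2 + c) ^ 2 + c) ^ 2 + c) =ᶠ[nhds (-2 : ℝ)] p := by
    filter_upwards [hpfix] with c hc
    have : (fc c)^[3] (p c) = (((p c) ^ 2 + c) ^ 2 + c) ^ 2 + c := by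
      simp [fc, Function.iterate_succ_apply']
    rw [← this, hc]
  have h3p : HasDerivAt p
      (2 * ((x ^ 2 + (-2)) ^ 2 + (-2)) * (2 * (x ^ 2 + (-2)) * (2 * x * q + 1) + 1) + 1)
      (-2) := h3.congr_of_eventuallyEq hev.symm
  have hlin : 2 * ((x ^ 2 + (-2)) ^ 2 + (-2)) * (2 * (x ^ 2 + (-2)) * (2 * x * q + 1) + 1) + 1
      = q := h3p.unique hp'
  -- derivative of the target function
  have hg : HasDerivAt (fun c => 8 * p c * ((p c) ^ 2 + c) * (((p c) ^ 2 + c) ^ 2 + c))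
      ((8 * q * (x ^ 2 + (-2)) + 8 * x * (2 * x * q + 1)) * ((x ^ 2 + (-2)) ^ 2 + (-2))
        + 8 * x * (x ^ 2 + (-2))
          * (2 * (x ^ 2 + (-2)) * (2 * x * q + 1) + 1)) (-2) := by
    have := ((hp'.const_mul (8:ℝ)).mul h1).mul h2
    exact this
  refine ⟨hg.differentiableAt, ?_⟩
  rw [hg.deriv]
  linear_combination
    ((240/7 + (72/7) * x + (-328/7) * x ^ 2 + (-1080/7) * x ^ 3 + (384/7) * x ^ 4
        + (512/7) * x ^ 5 + (-192/7) * x ^ 6) * q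
      + (64/7 + (-136/7) * x + (-440/7) * x ^ 2 + (144/7) * x ^ 3 + (256/7) * x ^ 4
        + (-96/7) * x ^ 5)) * hcubic
    + (-16/7 + (-40/7) * x + (24/7) * x ^ 2) * hlin
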